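/- If (xⁿ) is a Cauchy sequence in Q_Q(Y), then there exists a subsequence (x^{n_l}) and labelings x^{n_l} = ∑ᵢ₌₁^Q ⟦xᵢ^{n_l}⟧ such that for each i = 1,...,Q the sequence (xᵢ^{n_l})_l is Cauchy in Y. -/
import Mathlib


/-- The Almgren distance on `Q`-tuples: `min` over permutations of the max distance. -/
noncomputable def qS {Y : Type*} [MetricSpace Y] {Q : ℕ} (x y : Fin Q → Y) : ℝ :=
  sInf {r | ∃ σ : Equiv.Perm (Fin Q), r = ⨆ i, dist (x i) (y (σ i))}

lemma qS_lt {Y : Type*} [MetricSpace Y] {Q : ℕ} (x y : Fin Q → Y) {ε : ℝ}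
    (h : qS x y < ε) : ∃ σ : Equiv.Perm (Fin Q), ∀ i, dist (x i) (y (σ i)) < ε := by
  have heq : {r | ∃ σ : Equiv.Perm (Fin Q), r = ⨆ i, dist (x i) (y (σ i))}
      = Set.range (fun σ : Equiv.Perm (Fin Q) => ⨆ i, dist (x i) (y (σ i))) := by
    ext r; simp [eq_comm]
  have hne : {r | ∃ σ : Equiv.Perm (Fin Q), r = ⨆ i, dist (x i) (y (σ i))}.Nonempty :=
    ⟨_, 1, rfl⟩
  have hfin : ({r | ∃ σ : Equiv.Perm (Fin Q), r = ⨆ i, dist (x i) (y (σ i))} : Set ℝ).Finite := by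
    rw [heq]; exact Set.finite_range _
  rw [qS] at h
  obtain ⟨σ, hσ⟩ := hne.csInf_mem hfin
  rw [hσ] at h
  refine ⟨σ, fun i => lt_of_le_of_lt ?_ h⟩
  exact le_ciSup (f := fun i => dist (x i) (y (σ i))) (Set.Finite.bddAbove (Set.finite_range _)) i

lemma ofFn_comp_perm {Y : Type*} {Q : ℕ} (f : Fin Q → Y) (σ : Equiv.Perm (Fin Q)) :
    (List.ofFn (f ∘ σ) : Multiset Y) = List.ofFn f := by
  have h : ((List.finRange Q).map σ : Multiset (Fin Q)) = List.finRange Q := by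
    have h1 : (↑(List.finRange Q) : Multiset (Fin Q)) = Finset.univ.val := rfl
    have h2 := congrArg Finset.val (Finset.map_univ_equiv σ)
    rw [Finset.map_val] at h2
    calc ((List.finRange Q).map σ : Multiset (Fin Q))
        = Multiset.map σ (List.finRange Q) := by rw [Multiset.map_coe]
      _ = Multiset.map σ Finset.univ.val := by rw [h1]
      _ = Finset.univ.val := h2
      _ = List.finRange Q := h1.symm
  calc (List.ofFn (f ∘ σ) : Multiset Y)
      = Multiset.map f ((List.finRange Q).map σ : List (Fin Q)) := by
        simp [List.ofFn_eq_map, Multiset.map_coe, List.map_map, Function.comp]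
    _ = Multiset.map f (List.finRange Q) := by rw [h]
    _ = List.ofFn f := by simp [List.ofFn_eq_map, Multiset.map_coe]

/-- a 𝒮-Cauchy sequence in Q_Q(Y) has a subsequence admitting labelings
(representatives with the same multiset) whose Q branches are each Cauchy in Y. -/
theorem stmt3 {Y : Type*} [MetricSpace Y] {Q : ℕ} [NeZero Q]
    (u : ℕ → Fin Q → Y)
    (hu : ∀ ε : ℝ, 0 < ε → ∃ N, ∀ m ≥ N, ∀ n ≥ N, qS (u m) (u n) < ε) :
    ∃ φ : ℕ → ℕ, StrictMono φ ∧
      ∃ v : ℕ → Fin Q → Y,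
        (∀ l, (List.ofFn (v l) : Multiset Y) = List.ofFn (u (φ l))) ∧
        ∀ i : Fin Q, CauchySeq (fun l => v l i) := by

  choose N hN using fun l : ℕ => hu ((1/2 : ℝ)^l) (by positivity)
  set φ : ℕ → ℕ := fun l => Nat.rec (N 0) (fun l ih => max (ih + 1) (N (l+1))) l with hφ
  have hstep : ∀ l, φ (l+1) = max (φ l + 1) (N (l+1)) := fun l => rfl
  have hmono : StrictMono φ := strictMono_nat_of_lt_succ (fun n => by
    rw [hstep]; exact lt_of_lt_of_le (Nat.lt_succ_self _) (le_max_left _ _))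
  have hφN : ∀ l, N l ≤ φ l := by
    intro l
    cases l with
    | zero => exact le_refl _
    | succ l => rw [hstep]; exact le_max_right _ _
  have key : ∀ l, qS (u (φ l)) (u (φ (l+1))) < (1/2 : ℝ)^l :=
    fun l => hN l _ (hφN l) _ ((hφN l).trans (hmono (Nat.lt_succ_self l)).le)
  choose σ hσ using fun l => qS_lt _ _ (key l)
  set τ : ℕ → Equiv.Perm (Fin Q) := fun l => Nat.rec 1 (fun l ih => σ l * ih) l with hτ
  have hτstep : ∀ l, τ (l+1) = σ l * τ l := fun l => rfl
  refine ⟨φ, hmono, fun l => u (φ l) ∘ τ l, fun l => ofFn_comp_perm _ _, fun i => ?_⟩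
  apply cauchySeq_of_le_geometric (1/2 : ℝ) 1 (by norm_num)
  intro n
  have h := (hσ n (τ n i)).le
  rw [one_mul]
  calc dist ((u (φ n) ∘ τ n) i) ((u (φ (n+1)) ∘ τ (n+1)) i)
      = dist (u (φ n) (τ n i)) (u (φ (n+1)) (σ n (τ n i))) := by
        simp [hτstep, Equiv.Perm.mul_apply]
    _ ≤ (1/2 : ℝ)^n := h
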